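/- Let H be a nontrivial subgroup of G with H ≤ ι₁(G₁) and H ∩ ι_A(A) = {1}. Then the essential right cosets of H in G are exactly the cosets H·s with s ∈ ι₁(G₁). -/

import Mathlib

open Monoid

section EssentialCosets

variable {A : Type} [Group A] {Gf : Bool → Type} [∀ i, Group (Gf i)]
  (φ : ∀ i : Bool, A →* Gf i)

/-- `g` lies in the image `ι_i(G_i)` of the `i`-th factor of the pushout. -/
def InFactor (i : Bool) (g : PushoutI φ) : Prop :=
  g ∈ (PushoutI.of (φ := φ) i).range

/-- `L = (g₁, …, g_n)` is a normal decomposition of `g ∈ G = G₁ *_A G₂`: it is a nonempty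
sequence with product `g`, each entry is a nontrivial element of `ι₁(G₁) ∪ ι₂(G₂)`,
consecutive entries do not lie in the same factor, and if `n > 1` then no entry lies in
`ι_A(A)`. -/
def IsNormalDecomp (g : PushoutI φ) (L : List (PushoutI φ)) : Prop :=
  L ≠ [] ∧ L.prod = g ∧
    (∀ x ∈ L, x ≠ 1 ∧ (InFactor φ true x ∨ InFactor φ false x)) ∧
    (∀ n : ℕ, ∀ x y : PushoutI φ, L[n]? = some x → L[n + 1]? = some y →
      ¬ (InFactor φ true x ∧ InFactor φ true y) ∧
      ¬ (InFactor φ false x ∧ InFactor φ false y)) ∧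
    (1 < L.length → ∀ x ∈ L, x ∉ (PushoutI.base φ).range)

/-- The right coset `H·c` is *essential* if either `H·c = H`, or there is `h ∈ H` with a
normal decomposition `(h₁, …, h_n)`, an index `0 ≤ m < n`, and an element `s` of a factor
`ι_i(G_i)` containing `h_{m+1}`, such that `H·c = H·h₁⋯h_m·s`. -/
def IsEssentialCoset (H : Subgroup (PushoutI φ)) (c : PushoutI φ) : Prop :=
  c ∈ H ∨ ∃ (L : List (PushoutI φ)) (m : ℕ) (s : PushoutI φ),
    IsNormalDecomp φ L.prod L ∧ L.prod ∈ H ∧ m < L.length ∧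
    (∃ (i : Bool) (x : PushoutI φ), L[m]? = some x ∧ InFactor φ i x ∧ InFactor φ i s) ∧
    c * ((L.take m).prod * s)⁻¹ ∈ H

/-- The collection of essential right cosets `H·c` of `H` in `G`, as a set of subsets of `G`. -/
def essentialCosets (H : Subgroup (PushoutI φ)) : Set (Set (PushoutI φ)) :=
  {S | ∃ c : PushoutI φ, IsEssentialCoset φ H c ∧ S = {g : PushoutI φ | g * c⁻¹ ∈ H}}

end EssentialCosets

section Aux

variable {A : Type} [Group A] {Gf : Bool → Type} [∀ i, Group (Gf i)]
  {φ : ∀ i : Bool, A →* Gf i}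

/-- If a reduced word's product lies in a factor, the word has length at most `1`. -/
private lemma word_length_le_one (hφ : ∀ i, Function.Injective (φ i))
    {w : CoprodI.Word Gf} (hw : PushoutI.Reduced φ w) (i : Bool)
    (h : PushoutI.ofCoprodI w.prod ∈ (PushoutI.of (φ := φ) i).range) :
    w.toList.length ≤ 1 := by
  obtain ⟨g, hg⟩ := h
  by_cases hgr : g ∈ (φ i).range
  · obtain ⟨a, rfl⟩ := hgr
    have hmem : PushoutI.ofCoprodI w.prod ∈ (PushoutI.base φ).range := by
      rw [← hg, PushoutI.of_apply_eq_base]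
      exact ⟨a, rfl⟩
    rw [hw.eq_empty_of_mem_range hφ hmem]
    simp [CoprodI.Word.empty]
  · rcases PushoutI.NormalWord.transversal_nonempty φ hφ with ⟨d⟩
    obtain ⟨w', hw'prod, hw'map⟩ := hw.exists_normalWord_prod_eq d
    have hemp : (PushoutI.NormalWord.empty : PushoutI.NormalWord d).fstIdx ≠ some i := by
      simp [CoprodI.Word.fstIdx, PushoutI.NormalWord.empty, CoprodI.Word.empty]
    set v := PushoutI.NormalWord.cons (d := d) g PushoutI.NormalWord.empty hemp hgr with hv
    have hvprod : v.prod = PushoutI.of (φ := φ) i g := by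
      simp [hv]
    have : w' = v := PushoutI.NormalWord.prod_injective (by rw [hw'prod, hvprod, hg])
    have hlen : w.toList.length = w'.toList.length := by
      rw [← (List.length_map Sigma.fst : (w'.toList.map Sigma.fst).length = w'.toList.length), hw'map, List.length_map]
    rw [hlen, this]
    simp [hv, PushoutI.NormalWord.cons, CoprodI.Word.cons, PushoutI.NormalWord.empty,
      CoprodI.Word.empty]

/-- Any alternating list of nontrivial elements of the factors, none of which lies in the
base group, gives rise to a reduced word with the same product and length. -/
private lemma exists_reduced_word :
    ∀ L : List (PushoutI φ),
    (∀ x ∈ L, x ≠ 1 ∧ (InFactor φ true x ∨ InFactor φ false x)) →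
    (∀ x ∈ L, x ∉ (PushoutI.base φ).range) →
    L.Chain' (fun x y => ∀ j, InFactor φ j x → ¬ InFactor φ j y) →
    ∃ w : CoprodI.Word Gf, PushoutI.Reduced φ w ∧
      PushoutI.ofCoprodI w.prod = L.prod ∧ w.toList.length = L.length ∧
      (∀ j, w.fstIdx = some j → ∀ x, L.head? = some x → InFactor φ j x) := by
  intro L
  induction L with
  | nil =>
    intro _ _ _
    refine ⟨CoprodI.Word.empty, ?_, ?_, ?_, ?_⟩
    · intro g hg; simp [CoprodI.Word.empty] at hg
    · simp [CoprodI.Word.empty, CoprodI.Word.prod]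
    · simp [CoprodI.Word.empty]
    · intro j hj; simp [CoprodI.Word.fstIdx, CoprodI.Word.empty] at hj
  | cons x L ih =>
    intro hent hbase hchain
    obtain ⟨hx1, hxf⟩ := hent x List.mem_cons_self
    have hxb : x ∉ (PushoutI.base φ).range := hbase x List.mem_cons_self
    obtain ⟨i, g, hg⟩ : ∃ (i : Bool) (g : Gf i), PushoutI.of (φ := φ) i g = x := by
      rcases hxf with ⟨g, hg⟩ | ⟨g, hg⟩
      · exact ⟨true, g, hg⟩
      · exact ⟨false, g, hg⟩
    obtain ⟨w, hwred, hwprod, hwlen, hwfst⟩ := ih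
      (fun y hy => hent y (List.mem_cons_of_mem _ hy))
      (fun y hy => hbase y (List.mem_cons_of_mem _ hy)) hchain.tail
    have hrel : ∀ y ∈ L.head?, ∀ j, InFactor φ j x → ¬ InFactor φ j y :=
      fun y hy => (List.isChain_cons.mp hchain).1 y hy
    have hg1 : g ≠ 1 := by
      rintro rfl; exact hx1 (by simpa using hg.symm)
    have hmw : w.fstIdx ≠ some i := by
      intro hfst
      have hLne : L ≠ [] := by
        rintro rfl
        have : w.toList = [] := List.length_eq_zero_iff.mp (by rw [hwlen]; simp)
        simp [CoprodI.Word.fstIdx, this] at hfst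
      have hy : L.head? = some (L.head hLne) := List.head?_eq_head hLne
      exact hrel _ hy i ⟨g, hg⟩ (hwfst i hfst _ hy)
    refine ⟨CoprodI.Word.cons g w hmw hg1, ?_, ?_, ?_, ?_⟩
    · intro l hl
      simp only [CoprodI.Word.cons, List.mem_cons] at hl
      rcases hl with rfl | hl
      · rintro ⟨a, ha⟩
        exact hxb ⟨a, by rw [← PushoutI.of_apply_eq_base (φ := φ) i a,
          show φ i a = g from ha, hg]⟩
      · exact hwred l hl
    · rw [CoprodI.Word.prod_cons, map_mul, PushoutI.ofCoprodI_of, hg, hwprod, List.prod_cons]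
    · simp [CoprodI.Word.cons, hwlen]
    · intro j hj y hy
      rw [CoprodI.Word.fstIdx_cons] at hj
      obtain rfl : i = j := by injection hj
      simp only [List.head?_cons, Option.some.injEq] at hy
      cases hy
      exact ⟨g, hg⟩

/-- A normal decomposition whose product lies in a factor has length at most `1`. -/
private lemma length_le_one_of_prod_mem_factor (hφ : ∀ i, Function.Injective (φ i))
    (L : List (PushoutI φ))
    (hent : ∀ x ∈ L, x ≠ 1 ∧ (InFactor φ true x ∨ InFactor φ false x))
    (hbase : ∀ x ∈ L, x ∉ (PushoutI.base φ).range)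
    (hpair : ∀ n : ℕ, ∀ x y : PushoutI φ, L[n]? = some x → L[n + 1]? = some y →
      ¬ (InFactor φ true x ∧ InFactor φ true y) ∧
      ¬ (InFactor φ false x ∧ InFactor φ false y))
    (i : Bool) (hprod : L.prod ∈ (PushoutI.of (φ := φ) i).range) :
    L.length ≤ 1 := by
  have hchain : L.Chain' (fun x y => ∀ j, InFactor φ j x → ¬ InFactor φ j y) := by
    change List.IsChain _ L
    rw [List.isChain_iff_getElem]
    intro n hn
    have h1 : L[n]? = some (L[n]'(by omega)) := List.getElem?_eq_getElem _
    have h2 : L[n + 1]? = some (L[n + 1]'(by omega)) := List.getElem?_eq_getElem _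
    have := hpair n _ _ h1 h2
    intro j hj hj'
    cases j
    · exact this.2 ⟨hj, hj'⟩
    · exact this.1 ⟨hj, hj'⟩
  obtain ⟨w, hwred, hwprod, hwlen, -⟩ := exists_reduced_word L hent hbase hchain
  rw [← hwlen]
  exact word_length_le_one hφ hwred i (by rw [hwprod]; exact hprod)

end Aux

/-- Let `H` be a nontrivial subgroup of the amalgam `G = G₁ *_A G₂` of finite groups with
`H ≤ ι₁(G₁)` and `H ∩ ι_A(A) = {1}`. Then the essential right cosets of `H` in `G` are
exactly the cosets `H·s` with `s ∈ ι₁(G₁)`. -/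
theorem essentialCosets_of_le_factor_trivial_base_inter
    (A : Type) [Group A] (Gf : Bool → Type) [∀ i, Group (Gf i)] [∀ i, Finite (Gf i)]
    (φ : ∀ i : Bool, A →* Gf i) (hφ : ∀ i, Function.Injective (φ i))
    (H : Subgroup (PushoutI φ)) (hne : H ≠ ⊥)
    (hle : H ≤ (PushoutI.of (φ := φ) true).range)
    (hinter : H ⊓ (PushoutI.base φ).range = ⊥) :
    ∀ c : PushoutI φ, IsEssentialCoset φ H c ↔
      ∃ s ∈ (PushoutI.of (φ := φ) true).range, c * s⁻¹ ∈ H := by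
  intro c
  constructor
  · rintro (hc | ⟨L, m, s, ⟨hLne, -, hent, hpair, hbase⟩, hH, hm, ⟨i, x, hget, hxi, hsi⟩, hcos⟩)
    · exact ⟨c, hle hc, by simpa using H.one_mem⟩
    · have hlen1 : L.length = 1 := by
        rcases Nat.lt_or_ge L.length 2 with h | h
        · have := List.length_pos_iff.mpr hLne; omega
        · exfalso
          have hb := hbase (by omega)
          have := length_le_one_of_prod_mem_factor hφ L hent hb hpair true (hle hH)
          omega
      obtain ⟨a, rfl⟩ := List.length_eq_one_iff.mp hlen1
      have hm0 : m = 0 := by simp at hm; omega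
      subst hm0
      have hxa : x = a := by
        simpa [eq_comm] using hget
      subst hxa
      have haH : x ∈ H := by simpa using hH
      have hcs : c * s⁻¹ ∈ H := by simpa using hcos
      cases i with
      | true => exact ⟨s, hsi, hcs⟩
      | false =>
        exfalso
        have habase : x ∈ (PushoutI.base φ).range := by
          rw [← PushoutI.inf_of_range_eq_base_range hφ
            (show (true : Bool) ≠ false by simp)]
          exact ⟨hle haH, hxi⟩
        have hx1 : x = 1 := by
          have : x ∈ H ⊓ (PushoutI.base φ).range := ⟨haH, habase⟩
          rw [hinter] at this
          simpa using this
        exact (hent x (by simp)).1 hx1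
  · rintro ⟨s, hs, hcs⟩
    obtain ⟨⟨h, hhH⟩, hh1⟩ := Subgroup.ne_bot_iff_exists_ne_one.mp hne
    have hh1' : h ≠ 1 := fun e => hh1 (Subtype.ext e)
    right
    refine ⟨[h], 0, s, ⟨by simp, rfl, ?_, ?_, by simp⟩, by simpa using hhH, by simp,
      ⟨true, h, rfl, hle hhH, hs⟩, by simpa using hcs⟩
    · intro y hy
      simp only [List.mem_singleton] at hy
      subst hy
      exact ⟨hh1', Or.inl (hle hhH)⟩
    · intro n y z h1 h2
      rw [List.getElem?_cons_succ, List.getElem?_nil] at h2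
      cases h2
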